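/- Let d ≥ 4 and let U be the d × d unitary matrix defined by U = Σ_{j=1}^d λ_j |v_j⟩⟨v_j| with λ_1 = 1, λ_2 = -1, λ_{j+2} = exp(2πij/(d-2)), and eigenvectors v_1 = (1/√2, 1/√(2d-2), ..., 1/√(2d-2)), v_2 = (1/√2, -1/√(2d-2), ..., -1/√(2d-2)), v_{j+2} = (1/√(d-1))·(0, 1, ω^j, ω^{2j}, ..., ω^{j(d-2)}) where ω = exp(2πi/(d-1)). Then for all 2 ≤ k, ℓ ≤ d with k ≠ ℓ, the entry ⟨k|U|ℓ⟩ is nonzero. -/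

import Mathlib

/-- `uroot n = exp(2πi/n)`, a primitive `n`-th root of unity. -/
noncomputable def uroot (n : ℕ) : ℂ := Complex.exp (2 * Real.pi * Complex.I / n)

/-- The eigenvectors `v₁, …, v_d` (0-indexed) described in the paper:
`v 0 = (1/√2, 1/√(2d-2), …)`, `v 1 = (1/√2, -1/√(2d-2), …)`, and for `t ≥ 2`,
`v t = (1/√(d-1)) (0, 1, ω^{j}, ω^{2j}, …, ω^{j(d-2)})` with `j = t - 1` and
`ω = exp(2πi/(d-1))`. -/
noncomputable def evec (d : ℕ) (t : Fin d) : Fin d → ℂ :=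
  if t.val = 0 then
    fun a => if a.val = 0 then (Real.sqrt 2 : ℂ)⁻¹
             else ((Real.sqrt (2 * (d : ℝ) - 2) : ℝ) : ℂ)⁻¹
  else if t.val = 1 then
    fun a => if a.val = 0 then (Real.sqrt 2 : ℂ)⁻¹
             else -((Real.sqrt (2 * (d : ℝ) - 2) : ℝ) : ℂ)⁻¹
  else
    fun a => if a.val = 0 then 0
             else ((Real.sqrt ((d : ℝ) - 1) : ℝ) : ℂ)⁻¹ *
                    uroot (d - 1) ^ ((t.val - 1) * (a.val - 1))

/-- The eigenvalues: `λ 0 = 1`, `λ 1 = -1`, and `λ t = exp(2πi(t-1)/(d-2))` for `t ≥ 2`. -/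
noncomputable def eval' (d : ℕ) (t : Fin d) : ℂ :=
  if t.val = 0 then 1 else if t.val = 1 then -1 else uroot (d - 2) ^ (t.val - 1)

/-- The matrix `U = Σ_t λ_t |v_t⟩⟨v_t|`. -/
noncomputable def Umat (d : ℕ) : Matrix (Fin d) (Fin d) ℂ :=
  fun a b => ∑ t, eval' d t * evec d t a * (starRingEnd ℂ) (evec d t b)

lemma uroot_pow (n k : ℕ) : uroot n ^ k = Complex.exp (2 * Real.pi * Complex.I * k / n) := by
  rw [uroot, ← Complex.exp_nat_mul]
  congr 1
  ring

lemma conj_uroot_pow (n k : ℕ) :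
    (starRingEnd ℂ) (uroot n ^ k) = Complex.exp (-(2 * Real.pi * Complex.I * k / n)) := by
  rw [uroot_pow, ← Complex.exp_conj]
  congr 1
  simp [map_div₀, Complex.conj_I, map_ofNat]
  ring

theorem stmt5 (d : ℕ) (hd : 4 ≤ d) :
    ∀ a b : Fin d, 1 ≤ a.val → 1 ≤ b.val → a ≠ b → Umat d a b ≠ 0 := by
  obtain ⟨e, rfl⟩ : ∃ e, d = e + 2 := ⟨d - 2, by omega⟩
  have he2 : 2 ≤ e := by omega
  intro a b ha hb hab
  have hav : a.val < e + 2 := a.isLt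
  have hbv : b.val < e + 2 := b.isLt
  have hvne : a.val ≠ b.val := fun h => hab (Fin.ext h)
  -- notation
  set m : ℤ := (a.val : ℤ) - (b.val : ℤ) with hm
  have hm0 : m ≠ 0 := by omega
  have hmabs : |m| ≤ (e : ℤ) := by rw [abs_le]; omega
  have he0 : (e : ℂ) ≠ 0 := by
    exact_mod_cast Nat.cast_ne_zero.mpr (by omega : e ≠ 0)
  have he1 : ((e : ℂ) + 1) ≠ 0 := by
    have : (((e + 1 : ℕ)) : ℂ) ≠ 0 := Nat.cast_ne_zero.mpr (by omega)
    push_cast at this; exact this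
  have h2pi : (2 * (Real.pi : ℂ) * Complex.I) ≠ 0 := by
    simp [Real.pi_ne_zero, Complex.I_ne_zero, Complex.ofReal_ne_zero]
  set c : ℂ := 2 * (Real.pi : ℂ) * Complex.I * ((e : ℂ)⁻¹ + (m : ℂ) * ((e : ℂ) + 1)⁻¹)
    with hc
  set ζ : ℂ := Complex.exp c with hζ
  -- ζ ≠ 1
  have hζ1 : ζ ≠ 1 := by
    intro h
    rw [hζ, Complex.exp_eq_one_iff] at h
    obtain ⟨n, hn⟩ := h
    rw [hc] at hn
    have hC : ((e : ℂ) + 1) + (m : ℂ) * e = n * (e * ((e : ℂ) + 1)) := by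
      field_simp at hn
      have hn' : (2 * (Real.pi : ℂ) * Complex.I) * (((e : ℂ) + 1) + (m : ℂ) * e)
          = (2 * (Real.pi : ℂ) * Complex.I) * ((n : ℂ) * (e * ((e : ℂ) + 1))) := by
        linear_combination (2 * (Real.pi : ℂ) * Complex.I) * hn
      exact mul_left_cancel₀ h2pi hn'
    have hZ : ((e : ℤ) + 1) + m * e = n * (e * ((e : ℤ) + 1)) := by exact_mod_cast hC
    have hdvd : (e : ℤ) ∣ 1 := by
      have h1 : ((e : ℤ)) ∣ (e + 1 : ℤ) := ⟨n * ((e : ℤ) + 1) - m, by linear_combination hZ⟩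
      have h2 : ((e : ℤ)) ∣ ((e + 1 : ℤ) - e) := h1.sub dvd_rfl
      simpa using h2
    have := Int.le_of_dvd one_pos hdvd
    omega
  -- ζ^e ≠ 1
  have hζe : ζ ^ e ≠ 1 := by
    intro h
    rw [hζ, ← Complex.exp_nat_mul, Complex.exp_eq_one_iff] at h
    obtain ⟨n, hn⟩ := h
    rw [hc] at hn
    have hC : ((e : ℂ) + 1) + (m : ℂ) * e = n * ((e : ℂ) + 1) := by
      field_simp at hn
      have hn' : ((2 * (Real.pi : ℂ) * Complex.I) * e) * (((e : ℂ) + 1) + (m : ℂ) * e)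
          = ((2 * (Real.pi : ℂ) * Complex.I) * e) * ((n : ℂ) * ((e : ℂ) + 1)) := by
        linear_combination ((2 * (Real.pi : ℂ) * Complex.I) * e) * hn
      exact mul_left_cancel₀ (mul_ne_zero h2pi he0) hn'
    have hZ : ((e : ℤ) + 1) + m * e = n * ((e : ℤ) + 1) := by exact_mod_cast hC
    have hdvd : ((e : ℤ) + 1) ∣ m * e := ⟨n - 1, by linear_combination hZ⟩
    have hcop : IsCoprime ((e : ℤ) + 1) (e : ℤ) := by
      rw [Int.isCoprime_iff_gcd_eq_one]
      have h : ((e : ℤ) + 1) = ((e + 1 : ℕ) : ℤ) := by push_cast; ring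
      rw [h, Int.gcd_natCast_natCast]
      simp [Nat.Coprime]
    have hdm : ((e : ℤ) + 1) ∣ m := hcop.dvd_of_dvd_mul_right hdvd
    have hle : (e : ℤ) + 1 ≤ |m| := Int.le_of_dvd (abs_pos.mpr hm0) ((dvd_abs _ _).mpr hdm)
    omega
  have hζ0 : ζ ≠ 0 := Complex.exp_ne_zero c
  -- the summand as a function of ℕ
  set G : ℕ → ℂ := fun j =>
      eval' (e + 2) ⟨j % (e + 2), Nat.mod_lt _ (by omega)⟩ *
        evec (e + 2) ⟨j % (e + 2), Nat.mod_lt _ (by omega)⟩ a *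
        (starRingEnd ℂ) (evec (e + 2) ⟨j % (e + 2), Nat.mod_lt _ (by omega)⟩ b) with hG
  have h1 : Umat (e + 2) a b = ∑ j ∈ Finset.range (e + 2), G j := by
    rw [Umat, ← Fin.sum_univ_eq_sum_range]
    refine Finset.sum_congr rfl fun t _ => ?_
    simp [hG, Nat.mod_eq_of_lt t.isLt]
  have h2 : ∑ j ∈ Finset.range (e + 2), G j =
      (∑ j ∈ Finset.range e, G (j + 2) + G 1) + G 0 := by
    rw [Finset.sum_range_succ' _ (e + 1), Finset.sum_range_succ' _ e]
  have hG01 : G 1 + G 0 = 0 := by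
    have h0 : (0 : ℕ) % (e + 2) = 0 := Nat.zero_mod _
    have h1' : (1 : ℕ) % (e + 2) = 1 := Nat.mod_eq_of_lt (by omega)
    have ha0 : ¬ (a.val = 0) := by omega
    have hb0 : ¬ (b.val = 0) := by omega
    simp only [hG, h0, h1', eval', evec]
    norm_num [ha0, hb0, show a ≠ 0 from fun h => ha0 (by simp [h]),
      show b ≠ 0 from fun h => hb0 (by simp [h])]
  have h3 : ∀ j ∈ Finset.range e, G (j + 2) = ((e : ℂ) + 1)⁻¹ * ζ ^ (j + 1) := by
    intro j hj
    rw [Finset.mem_range] at hj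
    have hmod : (j + 2) % (e + 2) = j + 2 := Nat.mod_eq_of_lt (by omega)
    have hs2 : e + 2 - 2 = e := by omega
    have hs1 : e + 2 - 1 = e + 1 := by omega
    have hsqarg : ((e + 2 : ℕ) : ℝ) - 1 = ((e + 1 : ℕ) : ℝ) := by push_cast; ring
    have hsq : (((Real.sqrt (((e + 2 : ℕ) : ℝ) - 1)) : ℂ))⁻¹ *
        (((Real.sqrt (((e + 2 : ℕ) : ℝ) - 1)) : ℂ))⁻¹ = ((e : ℂ) + 1)⁻¹ := by
      rw [← mul_inv]
      congr 1
      rw [← Complex.ofReal_mul, Real.mul_self_sqrt (by rw [hsqarg]; positivity)]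
      rw [hsqarg]; push_cast; ring
    simp only [hG, hmod, eval', evec]
    simp only [if_neg (by omega : ¬ (j + 2 = 0)), if_neg (by omega : ¬ (j + 2 = 1)),
      if_neg (by omega : ¬ (a.val = 0)), if_neg (by omega : ¬ (b.val = 0))]
    rw [hs2, hs1]
    have hstep : (j + 2 - 1) = j + 1 := by omega
    rw [hstep]
    rw [map_mul, map_inv₀, Complex.conj_ofReal, conj_uroot_pow, uroot_pow, uroot_pow]
    rw [hζ, ← Complex.exp_nat_mul, ← hsq]
    set s : ℂ := (((Real.sqrt (((e + 2 : ℕ) : ℝ) - 1)) : ℂ))⁻¹ with hs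
    rw [show ∀ A B C : ℂ, Complex.exp A * (s * Complex.exp B) * (s * Complex.exp C)
        = s * s * (Complex.exp A * Complex.exp B * Complex.exp C) from fun A B C => by ring]
    rw [← Complex.exp_add, ← Complex.exp_add]
    congr 2
    rw [hc, hm]
    push_cast [Nat.cast_sub ha, Nat.cast_sub hb]
    field_simp
    ring
  rw [h1, h2, Finset.sum_congr rfl h3, add_assoc, hG01, add_zero, ← Finset.mul_sum]
  have hgeom : ∑ j ∈ Finset.range e, ζ ^ (j + 1) = (ζ ^ e - 1) / (ζ - 1) * ζ := by
    simp_rw [pow_succ]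
    rw [← Finset.sum_mul, geom_sum_eq hζ1]
  rw [hgeom]
  exact mul_ne_zero (inv_ne_zero he1)
    (mul_ne_zero (div_ne_zero (sub_ne_zero.mpr hζe) (sub_ne_zero.mpr hζ1)) hζ0)
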